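/- Let (φ, (t_u)_{u∈𝔞*}) be a representation of X on a C*-algebra A. Then for every w ∈ 𝔞* and every f ∈ D_X: φ(λ_w(f)) = t_w* φ(f) t_w, and t_w* φ(f) = φ(λ_w(f)) t_w*. -/
import Mathlib


open scoped ENNReal
open Classical
set_option linter.unusedSectionVars false
set_option synthInstance.maxHeartbeats 1000000
set_option maxHeartbeats 1000000

noncomputable section

variable {𝔞 : Type*} [Fintype 𝔞] [Nonempty 𝔞] [TopologicalSpace 𝔞] [DiscreteTopology 𝔞]

/-- The one-sided shift map on the full one-sided shift `𝔞^ℕ`. -/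
def shift (x : ℕ → 𝔞) : ℕ → 𝔞 := fun n => x (n + 1)

/-- Concatenation `u x` of a finite word `u` with an infinite sequence `x`. -/
def wcat (u : List 𝔞) (x : ℕ → 𝔞) : ℕ → 𝔞 := fun n =>
  if h : n < u.length then u.get ⟨n, h⟩ else x (n - u.length)

/-- `l∞(X)`: the C*-algebra of bounded complex-valued functions on `X`,
with pointwise operations and the supremum norm. -/
abbrev Linf (X : Set (ℕ → 𝔞)) : Type _ := lp (fun _ : X => ℂ) ∞

/-- The set `C(u,v) = {vx : x ∈ X, vx ∈ X, ux ∈ X}`. -/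
def cyl (X : Set (ℕ → 𝔞)) (u v : List 𝔞) : Set (ℕ → 𝔞) :=
  {y | ∃ x, x ∈ X ∧ wcat u x ∈ X ∧ wcat v x ∈ X ∧ y = wcat v x}

/-- The indicator function of a subset `S`, as an element of `l∞(X)`. -/
def chi (X S : Set (ℕ → 𝔞)) : Linf X :=
  ⟨fun x => S.indicator (fun _ => (1 : ℂ)) (x : ℕ → 𝔞),
    memℓp_infty ⟨1, by
      rintro r ⟨x, rfl⟩
      by_cases h : (x : ℕ → 𝔞) ∈ S <;> simp [Set.indicator_apply, h]⟩⟩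

/-- `D_X`: the smallest C*-subalgebra (norm-closed, star-closed subalgebra) of `l∞(X)`
containing the indicator functions `χ_{C(u,v)}` for all words `u, v`. -/
def Dalg (X : Set (ℕ → 𝔞)) : NonUnitalStarSubalgebra ℂ (Linf X) :=
  (NonUnitalStarAlgebra.adjoin ℂ
    {f : Linf X | ∃ u v : List 𝔞, f = chi X (cyl X u v)}).topologicalClosure

lemma chi_cyl_mem_Dalg (X : Set (ℕ → 𝔞)) (u v : List 𝔞) : chi X (cyl X u v) ∈ Dalg X :=
  (NonUnitalStarAlgebra.adjoin ℂ _).le_topologicalClosure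
    (NonUnitalStarAlgebra.subset_adjoin ℂ _ ⟨u, v, rfl⟩)

/-- The map `λ_w : l∞(X) → l∞(X)`, `λ_w(f)(x) = f(wx)` if `wx ∈ X`, and `0` otherwise. -/
def lambdaMap (X : Set (ℕ → 𝔞)) (w : List 𝔞) (f : Linf X) : Linf X :=
  ⟨fun x => if h : wcat w (x : ℕ → 𝔞) ∈ X then f ⟨wcat w (x : ℕ → 𝔞), h⟩ else 0,
    memℓp_infty ⟨‖f‖, by
      rintro r ⟨x, rfl⟩
      dsimp only
      split_ifs with h
      · exact lp.norm_apply_le_norm ENNReal.top_ne_zero f _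
      · rw [norm_zero]; exact norm_nonneg f⟩⟩

-- ### auxiliary lemmas on `wcat`

lemma aux_wcat_nil (x : ℕ → 𝔞) : wcat ([] : List 𝔞) x = x := by
  funext n; simp [wcat]

lemma aux_wcat_append (u v : List 𝔞) (x : ℕ → 𝔞) :
    wcat (u ++ v) x = wcat u (wcat v x) := by
  funext n
  simp only [wcat, List.length_append]
  by_cases h1 : n < u.length
  · have h2 : n < u.length + v.length := lt_of_lt_of_le h1 (Nat.le_add_right _ _)
    rw [dif_pos h2, dif_pos h1]
    simp [List.get_eq_getElem, List.getElem_append_left h1]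
  · by_cases h2 : n < u.length + v.length
    · rw [dif_pos h2, dif_neg h1, dif_pos (show n - u.length < v.length by omega)]
      simp [List.get_eq_getElem, List.getElem_append_right (by omega : u.length ≤ n)]
    · rw [dif_neg h2, dif_neg h1, dif_neg (show ¬ n - u.length < v.length by omega)]
      congr 1; omega

lemma aux_shift_wcat (a : 𝔞) (u : List 𝔞) (x : ℕ → 𝔞) :
    shift (wcat (a :: u) x) = wcat u x := by
  funext n
  simp only [shift, wcat, List.length_cons]
  by_cases h : n < u.length
  · rw [dif_pos (by omega : n + 1 < u.length + 1), dif_pos h]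
    simp [List.get_eq_getElem]
  · rw [dif_neg (by omega : ¬ n + 1 < u.length + 1), dif_neg h]
    congr 1; omega

lemma aux_wcat_mem {X : Set (ℕ → 𝔞)} (hXinv : ∀ x ∈ X, shift x ∈ X) :
    ∀ (u : List 𝔞) (x : ℕ → 𝔞), wcat u x ∈ X → x ∈ X := by
  intro u
  induction u with
  | nil => intro x h; rwa [aux_wcat_nil] at h
  | cons a u ih =>
    intro x h
    exact ih x (by rw [← aux_shift_wcat a u x]; exact hXinv _ h)

lemma aux_wcat_inj {u : List 𝔞} {x y : ℕ → 𝔞} (h : wcat u x = wcat u y) : x = y := by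
  funext n
  have := congrFun h (u.length + n)
  simp only [wcat, dif_neg (by omega : ¬ u.length + n < u.length)] at this
  simpa [Nat.add_sub_cancel_left] using this

lemma aux_wcat_lt (u : List 𝔞) (x : ℕ → 𝔞) {n : ℕ} (h : n < u.length) :
    wcat u x n = u.get ⟨n, h⟩ := dif_pos h

lemma aux_wcat_prefix {w v : List 𝔞} {x y : ℕ → 𝔞} (h : wcat w x = wcat v y)
    (hl : w.length ≤ v.length) : w <+: v := by
  rw [List.prefix_iff_eq_take]
  apply List.ext_getElem (by simp [Nat.min_eq_left hl])
  intro i h1 h2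
  have hi : i < w.length := h1
  have hiv : i < v.length := by omega
  have := congrFun h i
  rw [aux_wcat_lt w x hi, aux_wcat_lt v y hiv] at this
  simpa [List.get_eq_getElem] using this

lemma aux_wcat_comparable {w v : List 𝔞} {x y : ℕ → 𝔞} (h : wcat w x = wcat v y) :
    w <+: v ∨ v <+: w := by
  rcases le_total w.length v.length with hl | hl
  · exact Or.inl (aux_wcat_prefix h hl)
  · exact Or.inr (aux_wcat_prefix h.symm hl)


-- continuing: cyl membership lemmas
section part2
variable {𝔞 : Type*} [Fintype 𝔞] [Nonempty 𝔞] [TopologicalSpace 𝔞] [DiscreteTopology 𝔞]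
variable {X : Set (ℕ → 𝔞)}

lemma aux_mem_cyl_nil (w : List 𝔞) {z : ℕ → 𝔞} :
    z ∈ cyl X w [] ↔ z ∈ X ∧ wcat w z ∈ X := by
  constructor
  · rintro ⟨y, hy, hwy, -, he⟩
    rw [aux_wcat_nil] at he; subst he
    exact ⟨hy, hwy⟩
  · rintro ⟨hz, hwz⟩
    exact ⟨z, hz, hwz, by rwa [aux_wcat_nil], (aux_wcat_nil z).symm⟩

lemma aux_mem_cyl_prefix (hXinv : ∀ x ∈ X, shift x ∈ X) (u v' w : List 𝔞) {z : ℕ → 𝔞}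
    (hz : z ∈ X) (hwz : wcat w z ∈ X) :
    wcat w z ∈ cyl X u (w ++ v') ↔ (z ∈ cyl X u v' ∧ z ∈ cyl X w []) := by
  constructor
  · rintro ⟨y, hy, huy, hvy, he⟩
    rw [aux_wcat_append] at he hvy
    have hzv : z = wcat v' y := aux_wcat_inj he
    subst hzv
    refine ⟨⟨y, hy, huy, aux_wcat_mem hXinv w _ hvy, rfl⟩, (aux_mem_cyl_nil w).mpr ⟨hz, hwz⟩⟩
  · rintro ⟨⟨y, hy, huy, hv'y, rfl⟩, -⟩
    exact ⟨y, hy, huy, by rwa [aux_wcat_append], by rw [aux_wcat_append]⟩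

lemma aux_mem_cyl_ext (hXinv : ∀ x ∈ X, shift x ∈ X) (u v w' : List 𝔞) {z : ℕ → 𝔞}
    (hz : z ∈ X) (hwz : wcat (v ++ w') z ∈ X) :
    wcat (v ++ w') z ∈ cyl X u v ↔ (z ∈ cyl X (u ++ w') [] ∧ z ∈ cyl X (v ++ w') []) := by
  rw [aux_mem_cyl_nil, aux_mem_cyl_nil]
  constructor
  · rintro ⟨y, hy, huy, hvy, he⟩
    rw [aux_wcat_append] at he
    have hye : y = wcat w' z := (aux_wcat_inj he).symm
    subst hye
    exact ⟨⟨hz, by rwa [aux_wcat_append]⟩, ⟨hz, hwz⟩⟩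
  · rintro ⟨⟨-, hu⟩, -⟩
    refine ⟨wcat w' z, aux_wcat_mem hXinv v _ (by rwa [aux_wcat_append] at hwz),
      by rwa [aux_wcat_append] at hu, by rwa [aux_wcat_append] at hwz, by rw [aux_wcat_append]⟩

lemma aux_not_mem_cyl_incomp (u v w : List 𝔞) (h1 : ¬ w <+: v) (h2 : ¬ v <+: w)
    {z : ℕ → 𝔞} : wcat w z ∉ cyl X u v := by
  rintro ⟨y, hy, huy, hvy, he⟩
  rcases aux_wcat_comparable he with h | h
  · exact h1 h
  · exact h2 h

lemma aux_cyl_inter_incomp (v w : List 𝔞) (h1 : ¬ w <+: v) (h2 : ¬ v <+: w) :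
    cyl X w w ∩ cyl X v v = (∅ : Set (ℕ → 𝔞)) := by
  ext a
  simp only [Set.mem_inter_iff, Set.mem_empty_iff_false, iff_false]
  rintro ⟨⟨x, hx, hwx, -, rfl⟩, hv⟩
  exact aux_not_mem_cyl_incomp v v w h1 h2 hv

end part2

section part3
variable {𝔞 : Type*} [Fintype 𝔞] [Nonempty 𝔞] [TopologicalSpace 𝔞] [DiscreteTopology 𝔞]

variable {X : Set (ℕ → 𝔞)}

lemma aux_chi_apply (S : Set (ℕ → 𝔞)) (x : X) :
    (chi X S : ∀ _ : X, ℂ) x = if (x : ℕ → 𝔞) ∈ S then 1 else 0 := by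
  simp [chi, Set.indicator_apply]

lemma aux_lambdaMap_apply (w : List 𝔞) (f : Linf X) (x : X) :
    (lambdaMap X w f : ∀ _ : X, ℂ) x =
      if h : wcat w (x : ℕ → 𝔞) ∈ X then f ⟨wcat w (x : ℕ → 𝔞), h⟩ else 0 := rfl

lemma aux_chi_mul (S T : Set (ℕ → 𝔞)) : chi X S * chi X T = chi X (S ∩ T) := by
  apply lp.ext
  rw [lp.infty_coeFn_mul]
  funext x
  simp only [Pi.mul_apply, aux_chi_apply, Set.mem_inter_iff]
  by_cases hS : (x : ℕ → 𝔞) ∈ S <;> by_cases hT : (x : ℕ → 𝔞) ∈ T <;> simp [hS, hT]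

lemma aux_chi_star (S : Set (ℕ → 𝔞)) : star (chi X S) = chi X S := by
  apply lp.ext
  rw [lp.coeFn_star]
  funext x
  simp only [Pi.star_apply, aux_chi_apply]
  by_cases hS : (x : ℕ → 𝔞) ∈ S <;> simp [hS]

lemma aux_chi_empty : chi X (∅ : Set (ℕ → 𝔞)) = 0 := by
  apply lp.ext
  rw [lp.coeFn_zero]
  funext x
  simp [aux_chi_apply]

lemma aux_lambdaMap_mul (w : List 𝔞) (f g : Linf X) :
    lambdaMap X w (f * g) = lambdaMap X w f * lambdaMap X w g := by
  apply lp.ext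
  rw [lp.infty_coeFn_mul]
  funext x
  simp only [Pi.mul_apply, aux_lambdaMap_apply]
  split_ifs with h
  · rw [lp.infty_coeFn_mul]; rfl
  · rw [mul_zero]

lemma aux_lambdaMap_add (w : List 𝔞) (f g : Linf X) :
    lambdaMap X w (f + g) = lambdaMap X w f + lambdaMap X w g := by
  apply lp.ext
  rw [lp.coeFn_add]
  funext x
  simp only [Pi.add_apply, aux_lambdaMap_apply]
  split_ifs with h
  · rw [lp.coeFn_add]; rfl
  · rw [add_zero]

lemma aux_lambdaMap_sub (w : List 𝔞) (f g : Linf X) :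
    lambdaMap X w (f - g) = lambdaMap X w f - lambdaMap X w g := by
  apply lp.ext
  rw [lp.coeFn_sub]
  funext x
  simp only [Pi.sub_apply, aux_lambdaMap_apply]
  split_ifs with h
  · rw [lp.coeFn_sub]; rfl
  · rw [sub_zero]

lemma aux_lambdaMap_smul (w : List 𝔞) (c : ℂ) (f : Linf X) :
    lambdaMap X w (c • f) = c • lambdaMap X w f := by
  apply lp.ext
  rw [lp.coeFn_smul]
  funext x
  simp only [Pi.smul_apply, aux_lambdaMap_apply]
  split_ifs with h
  · rw [lp.coeFn_smul]; rfl
  · rw [smul_zero]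

lemma aux_lambdaMap_star (w : List 𝔞) (f : Linf X) :
    lambdaMap X w (star f) = star (lambdaMap X w f) := by
  apply lp.ext
  rw [lp.coeFn_star]
  funext x
  simp only [Pi.star_apply, aux_lambdaMap_apply]
  split_ifs with h
  · rw [lp.coeFn_star]; rfl
  · rw [star_zero]

lemma aux_lambdaMap_zero (w : List 𝔞) : lambdaMap X w (0 : Linf X) = 0 := by
  apply lp.ext
  rw [lp.coeFn_zero]
  funext x
  simp only [aux_lambdaMap_apply]
  split_ifs with h
  · rw [lp.coeFn_zero]; rfl
  · rfl

lemma aux_lambdaMap_norm_le (w : List 𝔞) (f : Linf X) : ‖lambdaMap X w f‖ ≤ ‖f‖ := by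
  refine lp.norm_le_of_forall_le (norm_nonneg f) fun x => ?_
  rw [aux_lambdaMap_apply]
  split_ifs with h
  · exact lp.norm_apply_le_norm ENNReal.top_ne_zero f _
  · rw [norm_zero]; exact norm_nonneg f

end part3

section part4
variable {𝔞 : Type*} [Fintype 𝔞] [Nonempty 𝔞] [TopologicalSpace 𝔞] [DiscreteTopology 𝔞]
variable {X : Set (ℕ → 𝔞)}

lemma aux_lam_chi_prefix (hXinv : ∀ x ∈ X, shift x ∈ X) (u v' w : List 𝔞) :
    lambdaMap X w (chi X (cyl X u (w ++ v'))) =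
      chi X (cyl X u v') * chi X (cyl X w []) := by
  apply lp.ext
  rw [lp.infty_coeFn_mul]
  funext x
  simp only [Pi.mul_apply, aux_lambdaMap_apply, aux_chi_apply]
  by_cases h : wcat w (x : ℕ → 𝔞) ∈ X
  · rw [dif_pos h]
    have hiff := aux_mem_cyl_prefix hXinv u v' w x.2 h
    by_cases hm : wcat w (x : ℕ → 𝔞) ∈ cyl X u (w ++ v')
    · obtain ⟨h1, h2⟩ := hiff.mp hm
      rw [if_pos hm, if_pos h1, if_pos h2, one_mul]
    · rw [if_neg hm]
      rcases not_and_or.mp (fun hc => hm (hiff.mpr hc)) with h1 | h1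
      · rw [if_neg h1, zero_mul]
      · rw [if_neg h1, mul_zero]
  · rw [dif_neg h, if_neg (fun hc => h ((aux_mem_cyl_nil w).mp hc).2), mul_zero]

lemma aux_lam_chi_ext (hXinv : ∀ x ∈ X, shift x ∈ X) (u v w' : List 𝔞) :
    lambdaMap X (v ++ w') (chi X (cyl X u v)) =
      chi X (cyl X (u ++ w') []) * chi X (cyl X (v ++ w') []) := by
  apply lp.ext
  rw [lp.infty_coeFn_mul]
  funext x
  simp only [Pi.mul_apply, aux_lambdaMap_apply, aux_chi_apply]
  by_cases h : wcat (v ++ w') (x : ℕ → 𝔞) ∈ X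
  · rw [dif_pos h]
    have hiff := aux_mem_cyl_ext hXinv u v w' x.2 h
    by_cases hm : wcat (v ++ w') (x : ℕ → 𝔞) ∈ cyl X u v
    · obtain ⟨h1, h2⟩ := hiff.mp hm
      rw [if_pos hm, if_pos h1, if_pos h2, one_mul]
    · rw [if_neg hm]
      rcases not_and_or.mp (fun hc => hm (hiff.mpr hc)) with h1 | h1
      · rw [if_neg h1, zero_mul]
      · rw [if_neg h1, mul_zero]
  · rw [dif_neg h, if_neg (fun hc => h ((aux_mem_cyl_nil (v ++ w')).mp hc).2), mul_zero]

lemma aux_lam_chi_incomp (u v w : List 𝔞) (h1 : ¬ w <+: v) (h2 : ¬ v <+: w) :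
    lambdaMap X w (chi X (cyl X u v)) = 0 := by
  apply lp.ext
  rw [lp.coeFn_zero]
  funext x
  simp only [aux_lambdaMap_apply, Pi.zero_apply]
  split_ifs with h
  · rw [aux_chi_apply, if_neg (aux_not_mem_cyl_incomp u v w h1 h2)]
  · rfl

lemma aux_lambdaMap_mul_chi_nil (w : List 𝔞) (f : Linf X) :
    lambdaMap X w f * chi X (cyl X w []) = lambdaMap X w f := by
  apply lp.ext
  rw [lp.infty_coeFn_mul]
  funext x
  simp only [Pi.mul_apply, aux_lambdaMap_apply, aux_chi_apply]
  split_ifs with h h2 h2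
  · rw [mul_one]
  · exact absurd ((aux_mem_cyl_nil w).mpr ⟨x.2, h⟩) h2
  · rw [zero_mul]
  · rw [zero_mul]

end part4

section part5
variable {A : Type*} [NormedRing A] [StarRing A] [CStarRing A] [NormedAlgebra ℂ A]
  [StarModule ℂ A] [CompleteSpace A]

lemma aux_proj (s : A)
    (h : s * star s * (s * star s) * (s * star s * (s * star s)) = s * star s * (s * star s)) :
    s * star s * (s * star s) = s * star s := by
  letI : CStarAlgebra A :=
    { ‹NormedRing A›, ‹StarRing A›, ‹CStarRing A›, ‹NormedAlgebra ℂ A›, ‹StarModule ℂ A›,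
      ‹CompleteSpace A› with }
  letI := CStarAlgebra.spectralOrder A
  haveI := CStarAlgebra.spectralOrderedRing A
  set p := s * star s with hpdef
  have hp : (0 : A) ≤ p := mul_star_self_nonneg s
  have hpsa : star p = p := by simp [hpdef, star_mul]
  have hpp : (0 : A) ≤ p * p := by
    have := star_mul_self_nonneg p
    rwa [hpsa] at this
  calc p * p = CFC.sqrt ((p * p) * (p * p)) := (CFC.sqrt_mul_self (p * p) hpp).symm
    _ = CFC.sqrt (p * p) := by rw [h]
    _ = p := CFC.sqrt_mul_self p hp

lemma aux_pisom (s : A) (hpp : s * star s * (s * star s) = s * star s) :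
    s * star s * s = s := by
  have h1 : (s * star s * s - s) * star (s * star s * s - s) = 0 := by
    have hst : star (s * star s * s - s) = star s * (s * star s) - star s := by
      simp [star_sub, star_mul, mul_assoc]
    rw [hst, mul_sub, sub_mul, sub_mul]
    have e1 : s * star s * s * (star s * (s * star s)) = s * star s := by
      calc s * star s * s * (star s * (s * star s))
          = (s * star s * (s * star s)) * (s * star s) := by simp only [mul_assoc]
        _ = s * star s := by rw [hpp, hpp]
    have e2 : s * (star s * (s * star s)) = s * star s := by
      calc s * (star s * (s * star s)) = s * star s * (s * star s) := by simp only [mul_assoc]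
        _ = s * star s := hpp
    have e3 : s * star s * s * star s = s * star s := by
      calc s * star s * s * star s = s * star s * (s * star s) := by simp only [mul_assoc]
        _ = s * star s := hpp
    rw [e1, e2, e3]
    simp
  have h2 : ‖s * star s * s - s‖ * ‖s * star s * s - s‖ = 0 := by
    rw [← CStarRing.norm_self_mul_star, h1, norm_zero]
  have h3 : s * star s * s - s = 0 := by
    rw [← norm_eq_zero]
    exact mul_self_eq_zero.mp h2
  exact sub_eq_zero.mp h3

end part5

section part6
lemma aux_phi_cont {𝔞 : Type*} [Fintype 𝔞] [Nonempty 𝔞] [TopologicalSpace 𝔞]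
    [DiscreteTopology 𝔞] (X : Set (ℕ → 𝔞))
    {A : Type*} [NormedRing A] [StarRing A] [CStarRing A] [NormedAlgebra ℂ A]
    [StarModule ℂ A] [CompleteSpace A]
    (φ : Dalg X →⋆ₙₐ[ℂ] A) : Continuous (fun a : Dalg X => φ a) := by
  letI : CStarAlgebra A :=
    { ‹NormedRing A›, ‹StarRing A›, ‹CStarRing A›, ‹NormedAlgebra ℂ A›, ‹StarModule ℂ A›,
      ‹CompleteSpace A› with }
  haveI hDclosed : IsClosed ((Dalg X : NonUnitalStarSubalgebra ℂ (Linf X)) : Set (Linf X)) :=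
    NonUnitalStarSubalgebra.isClosed_topologicalClosure _
  exact AddMonoidHomClass.continuous_of_bound φ 1 fun a =>
    le_trans (NonUnitalStarAlgHom.norm_apply_le φ a) (by rw [one_mul])

lemma aux_tfacts
    {𝔞 : Type*} [Fintype 𝔞] [Nonempty 𝔞] [TopologicalSpace 𝔞] [DiscreteTopology 𝔞]
    (X : Set (ℕ → 𝔞))
    {A : Type*} [NormedRing A] [StarRing A] [CStarRing A] [NormedAlgebra ℂ A]
    [StarModule ℂ A] [CompleteSpace A]
    (φ : Dalg X →⋆ₙₐ[ℂ] A) (t : List 𝔞 → A)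
    (hmul : ∀ u v : List 𝔞, t u * t v = t (u ++ v))
    (hrep : ∀ u v : List 𝔞,
      φ ⟨chi X (cyl X u v), chi_cyl_mem_Dalg X u v⟩ = t v * star (t u) * (t u * star (t v))) :
    (∀ u v : List 𝔞, φ ⟨chi X (cyl X u v), chi_cyl_mem_Dalg X u v⟩
      = t v * (star (t u) * (t u * star (t v)))) ∧
    (∀ a : List 𝔞, φ ⟨chi X (cyl X a []), chi_cyl_mem_Dalg X a []⟩ = star (t a) * t a) ∧
    (∀ v : List 𝔞, φ ⟨chi X (cyl X v v), chi_cyl_mem_Dalg X v v⟩ = t v * star (t v)) ∧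
    (∀ v : List 𝔞, star (t v) * (t v * star (t v)) = star (t v)) ∧
    (∀ v : List 𝔞, t v * (star (t v) * t v) = t v) ∧
    (∀ x y : Dalg X, φ x * φ y = φ y * φ x) ∧
    (∀ u v : List 𝔞, star (φ ⟨chi X (cyl X u v), chi_cyl_mem_Dalg X u v⟩)
      = φ ⟨chi X (cyl X u v), chi_cyl_mem_Dalg X u v⟩) := by
  classical
  have hshuffle : ∀ x y z : A, x * y = y * x → x * (y * z) = y * (x * z) := by
    intro x y z hc; rw [← mul_assoc, hc, mul_assoc]
  have hcomm : ∀ x y : Dalg X, φ x * φ y = φ y * φ x := by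
    intro x y
    rw [← map_mul, ← map_mul]
    congr 1
    exact Subtype.ext (mul_comm (x : Linf X) (y : Linf X))
  have hPsa : ∀ u v : List 𝔞, star (φ ⟨chi X (cyl X u v), chi_cyl_mem_Dalg X u v⟩)
      = φ ⟨chi X (cyl X u v), chi_cyl_mem_Dalg X u v⟩ := by
    intro u v
    rw [← map_star]
    congr 1
    exact Subtype.ext (aux_chi_star _)
  have hPidem : ∀ u v : List 𝔞, φ ⟨chi X (cyl X u v), chi_cyl_mem_Dalg X u v⟩ *
      φ ⟨chi X (cyl X u v), chi_cyl_mem_Dalg X u v⟩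
      = φ ⟨chi X (cyl X u v), chi_cyl_mem_Dalg X u v⟩ := by
    intro u v
    rw [← map_mul]
    congr 1
    exact Subtype.ext ((aux_chi_mul _ _).trans (by rw [Set.inter_self]))
  have hpart : ∀ v : List 𝔞, t v * star (t v) * t v = t v := by
    intro v
    have h := hPidem v v
    rw [hrep v v] at h
    exact aux_pisom (t v) (aux_proj (t v) h)
  have hPvv : ∀ v : List 𝔞, φ ⟨chi X (cyl X v v), chi_cyl_mem_Dalg X v v⟩
      = t v * star (t v) := by
    intro v
    have h := hPidem v v
    rw [hrep v v] at h
    rw [hrep v v]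
    exact aux_proj (t v) h
  have hqt : ∀ v : List 𝔞, star (t v) * (t v * star (t v)) = star (t v) := by
    intro v
    have h := congrArg star (hpart v)
    simpa [star_mul, star_star, mul_assoc] using h
  have hqt' : ∀ v : List 𝔞, star (t v) * t v * star (t v) = star (t v) := by
    intro v; have h := hqt v; rwa [← mul_assoc] at h
  have hpart' : ∀ v : List 𝔞, t v * (star (t v) * t v) = t v := by
    intro v; have h := hpart v; rwa [mul_assoc] at h
  have hnil_idem : t ([] : List 𝔞) * t [] = t [] := by simpa using hmul [] []
  have hnil_star : star (t ([] : List 𝔞)) = t [] := by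
    have hself : t ([] : List 𝔞) = t [] * star (t []) := by
      have hkey : (t ([] : List 𝔞) - t [] * star (t [])) *
          star (t ([] : List 𝔞) - t [] * star (t [])) = 0 := by
        have hp4 : t ([] : List 𝔞) * star (t []) * (t [] * star (t []))
            = t [] * star (t []) := by
          have h := hPidem [] []
          rw [hrep [] []] at h
          exact aux_proj _ h
        have hsp : star (t ([] : List 𝔞) - t [] * star (t []))
            = star (t []) - t [] * star (t []) := by
          simp [star_sub, star_mul, star_star]
        rw [hsp, mul_sub, sub_mul, sub_mul]
        have e2 : t ([] : List 𝔞) * (t [] * star (t [])) = t [] * star (t []) := by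
          rw [← mul_assoc, hnil_idem]
        have e3 : t ([] : List 𝔞) * star (t []) = t [] * star (t []) := rfl
        have e4 : t ([] : List 𝔞) * star (t []) * star (t []) = t [] * star (t []) := by
          rw [mul_assoc, ← star_mul, hnil_idem]
        rw [e2, e4, hp4]
        simp
      have h2 : ‖t ([] : List 𝔞) - t [] * star (t [])‖ = 0 := by
        have h := CStarRing.norm_self_mul_star (x := t ([] : List 𝔞) - t [] * star (t []))
        rw [hkey, norm_zero] at h
        exact mul_self_eq_zero.mp h.symm
      exact sub_eq_zero.mp (norm_eq_zero.mp h2)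
    calc star (t ([] : List 𝔞)) = star (t [] * star (t [])) := by rw [← hself]
      _ = t [] * star (t []) := by simp [star_mul, star_star]
      _ = t [] := hself.symm
  have hta_nil : ∀ a : List 𝔞, t a * t ([] : List 𝔞) = t a := by
    intro a; simpa using hmul a []
  have hq : ∀ a : List 𝔞, φ ⟨chi X (cyl X a []), chi_cyl_mem_Dalg X a []⟩
      = star (t a) * t a := by
    intro a
    rw [hrep a []]
    have h1 : t a * star (t ([] : List 𝔞)) = t a := by rw [hnil_star]; exact hta_nil a
    rw [h1]
    have h2 : t ([] : List 𝔞) * star (t a) = star (t a) := by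
      rw [← hnil_star, ← star_mul]
      congr 1
      exact hta_nil a
    rw [h2]
  have hrep' : ∀ u v : List 𝔞, φ ⟨chi X (cyl X u v), chi_cyl_mem_Dalg X u v⟩
      = t v * (star (t u) * (t u * star (t v))) := by
    intro u v; rw [hrep u v]; simp only [mul_assoc]
  exact ⟨hrep', hq, hPvv, hqt, hpart', hcomm, hPsa⟩

lemma aux_hgen
    {𝔞 : Type*} [Fintype 𝔞] [Nonempty 𝔞] [TopologicalSpace 𝔞] [DiscreteTopology 𝔞]
    (X : Set (ℕ → 𝔞))
    {A : Type*} [NormedRing A] [StarRing A] [CStarRing A] [NormedAlgebra ℂ A]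
    [StarModule ℂ A] [CompleteSpace A]
    (φ : Dalg X →⋆ₙₐ[ℂ] A) (t : List 𝔞 → A)
    (hmul : ∀ u v : List 𝔞, t u * t v = t (u ++ v))
    (hrep : ∀ u v : List 𝔞,
      φ ⟨chi X (cyl X u v), chi_cyl_mem_Dalg X u v⟩ = t v * star (t u) * (t u * star (t v)))
    (hXinv : ∀ x ∈ X, shift x ∈ X)
    (hlam : ∀ (w : List 𝔞) (f : Linf X), f ∈ Dalg X → lambdaMap X w f ∈ Dalg X)
    (w : List 𝔞) :
    ∀ u v : List 𝔞,
      (star (t w) * φ ⟨chi X (cyl X u v), chi_cyl_mem_Dalg X u v⟩ =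
        φ ⟨lambdaMap X w (chi X (cyl X u v)),
            hlam w _ (chi_cyl_mem_Dalg X u v)⟩ * star (t w)) ∧
      (φ ⟨chi X (cyl X u v), chi_cyl_mem_Dalg X u v⟩ * t w =
        t w * φ ⟨lambdaMap X w (chi X (cyl X u v)),
            hlam w _ (chi_cyl_mem_Dalg X u v)⟩) := by
  classical
  obtain ⟨hrep', hq, hPvv, hqt, hpart', hcomm, hPsa⟩ := aux_tfacts X φ t hmul hrep
  have hshuffle : ∀ x y z : A, x * y = y * x → x * (y * z) = y * (x * z) := by
    intro x y z hc; rw [← mul_assoc, hc, mul_assoc]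
  have hqt' : ∀ v : List 𝔞, star (t v) * t v * star (t v) = star (t v) := by
    intro v; have h := hqt v; rwa [← mul_assoc] at h
  -- main generator identity
  have hgen : ∀ u v : List 𝔞,
      star (t w) * φ ⟨chi X (cyl X u v), chi_cyl_mem_Dalg X u v⟩ =
        φ ⟨lambdaMap X w (chi X (cyl X u v)),
            hlam w _ (chi_cyl_mem_Dalg X u v)⟩ * star (t w) := by
    intro u v
    by_cases h1 : w <+: v
    · obtain ⟨v', rfl⟩ := h1
      have hlamEq : (⟨lambdaMap X w (chi X (cyl X u (w ++ v'))),
            hlam w _ (chi_cyl_mem_Dalg X u (w ++ v'))⟩ : Dalg X)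
          = ⟨chi X (cyl X u v'), chi_cyl_mem_Dalg X u v'⟩ *
              ⟨chi X (cyl X w []), chi_cyl_mem_Dalg X w []⟩ :=
        Subtype.ext (aux_lam_chi_prefix hXinv u v' w)
      rw [hlamEq, map_mul, hrep' u v', hq w]
      have hswap : (star (t w) * t w) * (t v' * (star (t u) * (t u * star (t v'))))
          = (t v' * (star (t u) * (t u * star (t v')))) * (star (t w) * t w) := by
        have h := hcomm ⟨chi X (cyl X w []), chi_cyl_mem_Dalg X w []⟩
          ⟨chi X (cyl X u v'), chi_cyl_mem_Dalg X u v'⟩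
        rwa [hq w, hrep' u v'] at h
      calc star (t w) * φ ⟨chi X (cyl X u (w ++ v')), chi_cyl_mem_Dalg X u (w ++ v')⟩
          = (star (t w) * t w) * ((t v' * (star (t u) * (t u * star (t v')))) * star (t w)) := by
            rw [hrep' u (w ++ v'), ← hmul w v', star_mul]
            simp only [mul_assoc]
        _ = (t v' * (star (t u) * (t u * star (t v')))) * (star (t w) * t w) * star (t w) := by
            rw [← mul_assoc, hswap]
    · by_cases h2 : v <+: w
      · obtain ⟨w', rfl⟩ := h2
        have hlamEq : (⟨lambdaMap X (v ++ w') (chi X (cyl X u v)),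
              hlam (v ++ w') _ (chi_cyl_mem_Dalg X u v)⟩ : Dalg X)
            = ⟨chi X (cyl X (u ++ w') []), chi_cyl_mem_Dalg X (u ++ w') []⟩ *
                ⟨chi X (cyl X (v ++ w') []), chi_cyl_mem_Dalg X (v ++ w') []⟩ :=
          Subtype.ext (aux_lam_chi_ext hXinv u v w')
        rw [hlamEq, map_mul, hq (u ++ w'), hq (v ++ w'), mul_assoc, hqt' (v ++ w')]
        have hswapqur : (star (t u) * t u) * (t w' * star (t w'))
            = (t w' * star (t w')) * (star (t u) * t u) := by
          have h := hcomm ⟨chi X (cyl X u []), chi_cyl_mem_Dalg X u []⟩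
            ⟨chi X (cyl X w' w'), chi_cyl_mem_Dalg X w' w'⟩
          rwa [hq u, hPvv w'] at h
        have hswapqvqu : (star (t v) * t v) * (star (t u) * t u)
            = (star (t u) * t u) * (star (t v) * t v) := by
          have h := hcomm ⟨chi X (cyl X v []), chi_cyl_mem_Dalg X v []⟩
            ⟨chi X (cyl X u []), chi_cyl_mem_Dalg X u []⟩
          rwa [hq v, hq u] at h
        have hL : star (t (v ++ w')) * φ ⟨chi X (cyl X u v), chi_cyl_mem_Dalg X u v⟩
            = star (t w') * ((star (t u) * t u) * star (t v)) := by
          calc star (t (v ++ w')) * φ ⟨chi X (cyl X u v), chi_cyl_mem_Dalg X u v⟩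
              = star (t w') * ((star (t v) * t v) * ((star (t u) * t u) * star (t v))) := by
                rw [hrep' u v, ← hmul v w', star_mul]
                simp only [mul_assoc]
            _ = star (t w') * ((star (t u) * t u) * ((star (t v) * t v) * star (t v))) := by
                rw [hshuffle _ _ _ hswapqvqu]
            _ = star (t w') * ((star (t u) * t u) * star (t v)) := by
                rw [hqt' v]
        have hR : (star (t (u ++ w')) * t (u ++ w')) * star (t (v ++ w'))
            = star (t w') * ((star (t u) * t u) * star (t v)) := by
          calc (star (t (u ++ w')) * t (u ++ w')) * star (t (v ++ w'))
              = star (t w') * ((star (t u) * t u) * ((t w' * star (t w')) * star (t v))) := by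
                rw [← hmul u w', ← hmul v w', star_mul, star_mul]
                simp only [mul_assoc]
            _ = star (t w') * ((t w' * star (t w')) * ((star (t u) * t u) * star (t v))) := by
                rw [hshuffle _ _ _ hswapqur]
            _ = star (t w') * ((star (t u) * t u) * star (t v)) := by
                rw [← mul_assoc (star (t w')) (t w' * star (t w')), hqt w']
        exact hL.trans hR.symm
      · have hlamEq : (⟨lambdaMap X w (chi X (cyl X u v)),
              hlam w _ (chi_cyl_mem_Dalg X u v)⟩ : Dalg X) = 0 :=
          Subtype.ext (aux_lam_chi_incomp u v w h1 h2)
        rw [hlamEq, map_zero, zero_mul]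
        have hzero : (t w * star (t w)) * (t v * star (t v)) = 0 := by
          rw [← hPvv w, ← hPvv v, ← map_mul]
          have hz : (⟨chi X (cyl X w w), chi_cyl_mem_Dalg X w w⟩ *
              ⟨chi X (cyl X v v), chi_cyl_mem_Dalg X v v⟩ : Dalg X) = 0 := by
            apply Subtype.ext
            show chi X (cyl X w w) * chi X (cyl X v v) = 0
            rw [aux_chi_mul, aux_cyl_inter_incomp v w h1 h2, aux_chi_empty]
          rw [hz, map_zero]
        have hwv : star (t w) * t v = 0 := by
          calc star (t w) * t v
              = (star (t w) * (t w * star (t w))) * (t v * (star (t v) * t v)) := by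
                rw [hqt w, hpart' v]
            _ = star (t w) * (((t w * star (t w)) * (t v * star (t v))) * t v) := by
                simp only [mul_assoc]
            _ = 0 := by rw [hzero, zero_mul, mul_zero]
        rw [hrep' u v, ← mul_assoc, hwv, zero_mul]
  -- star of lambdaMap of generators
  have hlamsa : ∀ u v : List 𝔞,
      star (φ ⟨lambdaMap X w (chi X (cyl X u v)), hlam w _ (chi_cyl_mem_Dalg X u v)⟩)
      = φ ⟨lambdaMap X w (chi X (cyl X u v)), hlam w _ (chi_cyl_mem_Dalg X u v)⟩ := by
    intro u v
    rw [← map_star]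
    congr 1
    apply Subtype.ext
    show star (lambdaMap X w (chi X (cyl X u v))) = lambdaMap X w (chi X (cyl X u v))
    rw [← aux_lambdaMap_star, aux_chi_star]
  have hgen2 : ∀ u v : List 𝔞,
      φ ⟨chi X (cyl X u v), chi_cyl_mem_Dalg X u v⟩ * t w =
        t w * φ ⟨lambdaMap X w (chi X (cyl X u v)),
            hlam w _ (chi_cyl_mem_Dalg X u v)⟩ := by
    intro u v
    have h := congrArg star (hgen u v)
    rw [star_mul, star_mul, star_star, hPsa, hlamsa] at h
    exact h
  exact fun u v => ⟨hgen u v, hgen2 u v⟩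


end part6

/-- for a representation `(φ, (t_u)_u)` of `X` on a C*-algebra `A`,
every `w ∈ 𝔞*` and every `f ∈ D_X`: `φ(λ_w(f)) = t_w* φ(f) t_w` and
`t_w* φ(f) = φ(λ_w(f)) t_w*`. -/
theorem rep_lambdaMap (X : Set (ℕ → 𝔞)) (hXclosed : IsClosed X)
    (hXinv : ∀ x ∈ X, shift x ∈ X)
    {A : Type*} [NormedRing A] [StarRing A] [CStarRing A] [NormedAlgebra ℂ A]
    [StarModule ℂ A] [CompleteSpace A]
    (φ : Dalg X →⋆ₙₐ[ℂ] A) (t : List 𝔞 → A)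
    (hmul : ∀ u v : List 𝔞, t u * t v = t (u ++ v))
    (hrep : ∀ u v : List 𝔞,
      φ ⟨chi X (cyl X u v), chi_cyl_mem_Dalg X u v⟩ = t v * star (t u) * (t u * star (t v)))
    (hlam : ∀ (w : List 𝔞) (f : Linf X), f ∈ Dalg X → lambdaMap X w f ∈ Dalg X)
    (w : List 𝔞) (f : Dalg X) :
    φ ⟨lambdaMap X w (f : Linf X), hlam w f f.2⟩ = star (t w) * φ f * t w ∧
    star (t w) * φ f = φ ⟨lambdaMap X w (f : Linf X), hlam w f f.2⟩ * star (t w) := by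

  classical
  haveI hDclosed : IsClosed ((Dalg X : NonUnitalStarSubalgebra ℂ (Linf X)) : Set (Linf X)) :=
    NonUnitalStarSubalgebra.isClosed_topologicalClosure _
  obtain ⟨hrep', hq, hPvv, hqt, hpart', hcomm, hPsa⟩ := aux_tfacts X φ t hmul hrep
  have hGgen' := aux_hgen X φ t hmul hrep hXinv hlam w
  -- the set of good elements
  set GS : Set (Dalg X) := {a : Dalg X |
    star (t w) * φ a = φ ⟨lambdaMap X w a.1, hlam w a.1 a.2⟩ * star (t w) ∧
    φ a * t w = t w * φ ⟨lambdaMap X w a.1, hlam w a.1 a.2⟩} with hGSdef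
  have hGmul : ∀ a b : Dalg X, a ∈ GS → b ∈ GS → a * b ∈ GS := by
    intro a b ha hb
    obtain ⟨ha1, ha2⟩ := ha
    obtain ⟨hb1, hb2⟩ := hb
    have hLm : (⟨lambdaMap X w (a * b).1, hlam w (a * b).1 (a * b).2⟩ : Dalg X)
        = ⟨lambdaMap X w a.1, hlam w a.1 a.2⟩ * ⟨lambdaMap X w b.1, hlam w b.1 b.2⟩ :=
      Subtype.ext (aux_lambdaMap_mul w a.1 b.1)
    constructor
    · show star (t w) * φ (a * b) = _
      rw [hLm, map_mul, map_mul, ← mul_assoc, ha1, mul_assoc, hb1, ← mul_assoc]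
    · show φ (a * b) * t w = _
      rw [hLm, map_mul, map_mul, mul_assoc, hb2, ← mul_assoc (φ a) (t w), ha2, mul_assoc]
  have hGadd : ∀ a b : Dalg X, a ∈ GS → b ∈ GS → a + b ∈ GS := by
    intro a b ha hb
    obtain ⟨ha1, ha2⟩ := ha
    obtain ⟨hb1, hb2⟩ := hb
    have hLm : (⟨lambdaMap X w (a + b).1, hlam w (a + b).1 (a + b).2⟩ : Dalg X)
        = ⟨lambdaMap X w a.1, hlam w a.1 a.2⟩ + ⟨lambdaMap X w b.1, hlam w b.1 b.2⟩ :=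
      Subtype.ext (aux_lambdaMap_add w a.1 b.1)
    constructor
    · show star (t w) * φ (a + b) = _
      rw [hLm, map_add, map_add, mul_add, ha1, hb1, add_mul]
    · show φ (a + b) * t w = _
      rw [hLm, map_add, map_add, add_mul, ha2, hb2, mul_add]
  have hGzero : (0 : Dalg X) ∈ GS := by
    have hLm : (⟨lambdaMap X w (0 : Dalg X).1, hlam w _ (0 : Dalg X).2⟩ : Dalg X) = 0 :=
      Subtype.ext (aux_lambdaMap_zero w)
    constructor
    · show star (t w) * φ 0 = _
      rw [hLm, map_zero, mul_zero, zero_mul]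
    · show φ 0 * t w = _
      rw [hLm, map_zero, mul_zero, zero_mul]
  have hGsmul : ∀ (r : ℂ) (a : Dalg X), a ∈ GS → r • a ∈ GS := by
    intro r a ha
    obtain ⟨ha1, ha2⟩ := ha
    have hLm : (⟨lambdaMap X w (r • a).1, hlam w _ (r • a).2⟩ : Dalg X)
        = r • ⟨lambdaMap X w a.1, hlam w a.1 a.2⟩ :=
      Subtype.ext (aux_lambdaMap_smul w r a.1)
    constructor
    · show star (t w) * φ (r • a) = _
      rw [hLm, map_smul, map_smul, mul_smul_comm, ha1, smul_mul_assoc]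
    · show φ (r • a) * t w = _
      rw [hLm, map_smul, map_smul, smul_mul_assoc, ha2, mul_smul_comm]
  have hGstar : ∀ a : Dalg X, a ∈ GS → star a ∈ GS := by
    intro a ha
    obtain ⟨ha1, ha2⟩ := ha
    have hLm : (⟨lambdaMap X w (star a).1, hlam w _ (star a).2⟩ : Dalg X)
        = star ⟨lambdaMap X w a.1, hlam w a.1 a.2⟩ :=
      Subtype.ext (aux_lambdaMap_star w a.1)
    constructor
    · show star (t w) * φ (star a) = _
      rw [hLm, map_star, map_star]
      have h := congrArg star ha2
      rwa [star_mul, star_mul] at h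
    · show φ (star a) * t w = _
      rw [hLm, map_star, map_star]
      have h := congrArg star ha1
      rwa [star_mul, star_mul, star_star] at h
  have hGgen : ∀ u v : List 𝔞,
      (⟨chi X (cyl X u v), chi_cyl_mem_Dalg X u v⟩ : Dalg X) ∈ GS :=
    fun u v => hGgen' u v
  -- closedness of GS and the closure argument
  have hφc : Continuous (fun a : Dalg X => φ a) := aux_phi_cont X φ
  have hLc : Continuous (fun a : Dalg X =>
      (⟨lambdaMap X w a.1, hlam w a.1 a.2⟩ : Dalg X)) := by
    apply Continuous.subtype_mk
    have hlip : LipschitzWith 1 (lambdaMap X w : Linf X → Linf X) := by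
      apply LipschitzWith.of_dist_le_mul
      intro g1 g2
      rw [dist_eq_norm, dist_eq_norm, ← aux_lambdaMap_sub]
      rw [NNReal.coe_one, one_mul]
      exact aux_lambdaMap_norm_le w (g1 - g2)
    exact hlip.continuous.comp continuous_subtype_val
  have hGSclosed : IsClosed GS := by
    rw [hGSdef]
    exact IsClosed.inter
      (isClosed_eq (continuous_const.mul hφc) ((hφc.comp hLc).mul continuous_const))
      (isClosed_eq (hφc.mul continuous_const) (continuous_const.mul (hφc.comp hLc)))
  have hGoodAll : ∀ g : Dalg X, g ∈ GS := by
    intro g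
    have hmemc : (g : Linf X) ∈ closure
        (↑(NonUnitalStarAlgebra.adjoin ℂ
          {f : Linf X | ∃ u v : List 𝔞, f = chi X (cyl X u v)}) : Set (Linf X)) := g.2
    have himgclosed : IsClosed (Subtype.val '' GS : Set (Linf X)) :=
      hDclosed.isClosedEmbedding_subtypeVal.isClosedMap _ hGSclosed
    have hsub : (↑(NonUnitalStarAlgebra.adjoin ℂ
        {f : Linf X | ∃ u v : List 𝔞, f = chi X (cyl X u v)}) : Set (Linf X))
        ⊆ Subtype.val '' GS := by
      intro x hx
      have hx' : x ∈ NonUnitalStarAlgebra.adjoin ℂ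
          {f : Linf X | ∃ u v : List 𝔞, f = chi X (cyl X u v)} := hx
      clear hx
      induction hx' using NonUnitalStarAlgebra.adjoin_induction with
      | mem y hy =>
        obtain ⟨u, v, rfl⟩ := hy
        exact ⟨⟨chi X (cyl X u v), chi_cyl_mem_Dalg X u v⟩, hGgen u v, rfl⟩
      | add y z hy hz hy' hz' =>
        obtain ⟨a, ha, rfl⟩ := hy'
        obtain ⟨b, hb, rfl⟩ := hz'
        exact ⟨a + b, hGadd a b ha hb, rfl⟩
      | zero => exact ⟨0, hGzero, rfl⟩
      | mul y z hy hz hy' hz' =>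
        obtain ⟨a, ha, rfl⟩ := hy'
        obtain ⟨b, hb, rfl⟩ := hz'
        exact ⟨a * b, hGmul a b ha hb, rfl⟩
      | smul r y hy hy' =>
        obtain ⟨a, ha, rfl⟩ := hy'
        exact ⟨r • a, hGsmul r a ha, rfl⟩
      | star y hy hy' =>
        obtain ⟨a, ha, rfl⟩ := hy'
        exact ⟨star a, hGstar a ha, rfl⟩
    obtain ⟨a, ha, hav⟩ := closure_minimal hsub himgclosed hmemc
    have hag : a = g := Subtype.coe_injective hav
    exact hag ▸ ha
  obtain ⟨hg1, hg2⟩ := hGoodAll f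
  refine ⟨?_, hg1⟩
  have h2 : φ (⟨lambdaMap X w (f : Linf X), hlam w f f.2⟩ : Dalg X) * (star (t w) * t w)
      = φ ⟨lambdaMap X w (f : Linf X), hlam w f f.2⟩ := by
    rw [← hq w, ← map_mul]
    congr 1
    exact Subtype.ext (aux_lambdaMap_mul_chi_nil w (f : Linf X))
  rw [hg1, mul_assoc, h2]


end
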